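/- Let ρ, α, β ∈ ℝ, γ > 0, o₂ > 0; set K = K_{o₂}, L = L_{o₂}, ‖K‖ = (∫₀¹∫₀ˣ K² dy dx)^{1/2}, ‖L‖ = (∫₀¹∫₀ˣ L² dy dx)^{1/2}, and ‖K_x(1,·)‖ = (∫₀¹ (∂ₓK(1,y))² dy)^{1/2}. Suppose ẽʷ, eᵛ : [0,1] × [0,∞) → ℝ are a classical solution (continuous; twice continuously differentiable in x with jointly continuous spatial derivatives; ẽʷ continuously differentiable in t with ẽʷ_t jointly continuous) of: ẽʷ_t = ẽʷ_xx − (o₂ + ρ)ẽʷ + αeᵛ − α∫₀ˣ K(x,y)eᵛ(y,t)dy; 0 = eᵛ_xx − γeᵛ + βẽʷ + β∫₀ˣ L(x,y)ẽʷ(y,t)dy; ẽʷ_x(0,t) = 0; ẽʷ_x(1,t) = −∫₀¹ ∂ₓK(1,y)·[ẽʷ(y,t) + ∫₀ʸ L(y,z)ẽʷ(z,t)dz] dy; eᵛ_x(0,t) = eᵛ_x(1,t) = 0. If o₂ + ρ > (|α||β|/γ)·(1 + ‖K‖)·(1 + ‖L‖) + ((1 + ‖L‖)²·‖K_x(1,·)‖²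 + 2)/2, then with o₃ = (o₂ + ρ) − (|α||β|/γ)(1 + ‖K‖)(1 + ‖L‖) − ((1 + ‖L‖)²‖K_x(1,·)‖² + 2)/2, for all t ≥ 0: ∫₀¹ ẽʷ(x,t)² dx ≤ e^{−2o₃t}·∫₀¹ ẽʷ(x,0)² dx. -/

import Mathlib

/-- The backstepping kernel `K_c`. -/
noncomputable def Kker (c x y : ℝ) : ℝ :=
  -(c / 2) * x * ∑' m : ℕ, (c * (x ^ 2 - y ^ 2) / 4) ^ m /
    ((Nat.factorial m : ℝ) * (Nat.factorial (m + 1) : ℝ))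

/-- The inverse backstepping kernel `L_c`. -/
noncomputable def Lker (c x y : ℝ) : ℝ :=
  -(c / 2) * x * ∑' m : ℕ, (-1 : ℝ) ^ m * (c * (x ^ 2 - y ^ 2) / 4) ^ m /
    ((Nat.factorial m : ℝ) * (Nat.factorial (m + 1) : ℝ))

/-- L² norm of a kernel over the triangle {0 ≤ y ≤ x ≤ 1}. -/
noncomputable def kerNorm (f : ℝ → ℝ → ℝ) : ℝ :=
  Real.sqrt (∫ x in (0:ℝ)..1, ∫ y in (0:ℝ)..x, (f x y) ^ 2)

/-- L² norm of `y ↦ ∂ₓK_c(1,y)` on `[0,1]`. -/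
noncomputable def kerXNorm (c : ℝ) : ℝ :=
  Real.sqrt (∫ y in (0:ℝ)..1, (deriv (fun ξ => Kker c ξ y) 1) ^ 2)


open Metric Real



namespace SMTD

noncomputable def Fser (u : ℝ) : ℝ :=
  ∑' m : ℕ, u ^ m / ((Nat.factorial m : ℝ) * (Nat.factorial (m + 1) : ℝ))

noncomputable def F1 (u : ℝ) : ℝ :=
  ∑' m : ℕ, ((m : ℝ) * u ^ (m - 1)) / ((Nat.factorial m : ℝ) * (Nat.factorial (m + 1) : ℝ))

lemma den_pos (m : ℕ) : (0:ℝ) < (Nat.factorial m : ℝ) * (Nat.factorial (m + 1) : ℝ) := by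
  positivity

lemma den_ge (m : ℕ) : (Nat.factorial m : ℝ) ≤ (Nat.factorial m : ℝ) * (Nat.factorial (m + 1) : ℝ) := by
  have h1 : (1:ℝ) ≤ (Nat.factorial (m+1) : ℝ) := by exact_mod_cast Nat.one_le_iff_ne_zero.mpr (Nat.factorial_pos (m+1)).ne'
  nlinarith [(Nat.cast_pos (α := ℝ)).mpr (Nat.factorial_pos m)]

lemma nat_le_two_pow (m : ℕ) : (m : ℝ) ≤ 2 ^ m := by
  exact_mod_cast (Nat.lt_two_pow_self (n := m)).le

lemma summable_at_zero (c : ℕ → ℝ) : Summable (fun m : ℕ => (0:ℝ) ^ m * c m) := by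
  apply summable_of_ne_finset_zero (s := {0})
  intro m hm
  simp only [Finset.mem_singleton] at hm
  rw [zero_pow hm, zero_mul]

lemma bound1 {R : ℝ} (hR : 1 ≤ R) (m : ℕ) {y : ℝ} (hy : |y| < R) :
    ‖((m : ℝ) * y ^ (m - 1)) / ((Nat.factorial m : ℝ) * (Nat.factorial (m + 1) : ℝ))‖
      ≤ (2 * R) ^ m / (Nat.factorial m : ℝ) := by
  have hR0 : (0:ℝ) < R := lt_of_lt_of_le one_pos hR
  have h1 : ‖((m : ℝ) * y ^ (m - 1)) / ((Nat.factorial m : ℝ) * (Nat.factorial (m + 1) : ℝ))‖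
      = (m : ℝ) * |y| ^ (m - 1) / ((Nat.factorial m : ℝ) * (Nat.factorial (m + 1) : ℝ)) := by
    rw [Real.norm_eq_abs, abs_div, abs_mul, abs_pow, abs_of_pos (den_pos m), Nat.abs_cast]
  rw [h1]
  have h2 : (m : ℝ) * |y| ^ (m - 1) ≤ (2 * R) ^ m := by
    have hy' : |y| ^ (m-1) ≤ R ^ (m-1) := pow_le_pow_left₀ (abs_nonneg y) hy.le _
    have hRp : R ^ (m-1) ≤ R ^ m := pow_le_pow_right₀ hR (Nat.sub_le m 1)
    calc (m:ℝ) * |y| ^ (m-1) ≤ 2 ^ m * R ^ m := by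
          apply mul_le_mul (nat_le_two_pow m) (hy'.trans hRp) (by positivity) (by positivity)
      _ = (2 * R) ^ m := (mul_pow 2 R m).symm
  exact div_le_div₀ (by positivity) h2 (by positivity) (den_ge m)

lemma bound2 {R : ℝ} (hR : 1 ≤ R) (m : ℕ) {y : ℝ} (hy : |y| < R) :
    ‖((m : ℝ) * (((m-1 : ℕ) : ℝ) * y ^ (m - 1 - 1))) / ((Nat.factorial m : ℝ) * (Nat.factorial (m + 1) : ℝ))‖
      ≤ (4 * R) ^ m / (Nat.factorial m : ℝ) := by
  have hR0 : (0:ℝ) < R := lt_of_lt_of_le one_pos hR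
  have h1 : ‖((m : ℝ) * (((m-1 : ℕ) : ℝ) * y ^ (m - 1 - 1))) / ((Nat.factorial m : ℝ) * (Nat.factorial (m + 1) : ℝ))‖
      = (m : ℝ) * (((m-1 : ℕ) : ℝ) * |y| ^ (m - 1 - 1)) / ((Nat.factorial m : ℝ) * (Nat.factorial (m + 1) : ℝ)) := by
    rw [Real.norm_eq_abs, abs_div, abs_mul, abs_mul, abs_pow, abs_of_pos (den_pos m),
      Nat.abs_cast, Nat.abs_cast]
  rw [h1]
  have h2 : (m : ℝ) * (((m-1 : ℕ) : ℝ) * |y| ^ (m - 1 - 1)) ≤ (4 * R) ^ m := by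
    have hy' : |y| ^ (m-1-1) ≤ R ^ (m-1-1) := pow_le_pow_left₀ (abs_nonneg y) hy.le _
    have hRp : R ^ (m-1-1) ≤ R ^ m := pow_le_pow_right₀ hR ((Nat.sub_le _ 1).trans (Nat.sub_le m 1))
    have hm1 : ((m-1:ℕ) : ℝ) ≤ 2 ^ m := le_trans (nat_le_two_pow (m-1))
      (pow_le_pow_right₀ one_le_two (Nat.sub_le m 1))
    calc (m:ℝ) * (((m-1:ℕ):ℝ) * |y| ^ (m-1-1)) ≤ 2 ^ m * (2 ^ m * R ^ m) := by
          apply mul_le_mul (nat_le_two_pow m) _ (by positivity) (by positivity)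
          exact mul_le_mul hm1 (hy'.trans hRp) (by positivity) (by positivity)
      _ = (4 * R) ^ m := by rw [mul_pow, show (4:ℝ) = 2*2 by norm_num, mul_pow]; ring
  exact div_le_div₀ (by positivity) h2 (by positivity) (den_ge m)

lemma summable_pow_fact (r : ℝ) : Summable (fun m : ℕ => r ^ m / (Nat.factorial m : ℝ)) :=
  Real.summable_pow_div_factorial r

lemma hasDerivAt_Fser (u : ℝ) : HasDerivAt Fser (F1 u) u := by
  set R : ℝ := |u| + 1 with hRdef
  have hR : 1 ≤ R := le_add_of_nonneg_left (abs_nonneg u)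
  have hu : u ∈ ball (0:ℝ) R := by
    simp [mem_ball, Real.dist_eq, hRdef]
  have h0 : (0:ℝ) ∈ ball (0:ℝ) R := by
    simp only [mem_ball, dist_self]; positivity
  exact hasDerivAt_tsum_of_isPreconnected
    (g := fun (m : ℕ) (y : ℝ) => y ^ m / ((Nat.factorial m : ℝ) * (Nat.factorial (m + 1) : ℝ)))
    (g' := fun (m : ℕ) (y : ℝ) => ((m : ℝ) * y ^ (m - 1)) / ((Nat.factorial m : ℝ) * (Nat.factorial (m + 1) : ℝ)))
    (summable_pow_fact (2*R)) isOpen_ball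
    (convex_ball 0 R).isPreconnected
    (fun m y _ => (hasDerivAt_pow m y).div_const _)
    (fun m y hy => bound1 hR m (by simpa [mem_ball, Real.dist_eq] using hy))
    h0
    (by
      have : (fun m : ℕ => (0:ℝ) ^ m / ((Nat.factorial m : ℝ) * (Nat.factorial (m + 1) : ℝ)))
          = fun m : ℕ => (0:ℝ) ^ m * ((Nat.factorial m : ℝ) * (Nat.factorial (m + 1) : ℝ))⁻¹ := by
        funext m; rw [div_eq_mul_inv]
      rw [this]; exact summable_at_zero _)
    hu

noncomputable def F2 (u : ℝ) : ℝ :=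
  ∑' m : ℕ, ((m : ℝ) * (((m-1 : ℕ) : ℝ) * u ^ (m - 1 - 1))) / ((Nat.factorial m : ℝ) * (Nat.factorial (m + 1) : ℝ))

lemma hasDerivAt_F1 (u : ℝ) : HasDerivAt F1 (F2 u) u := by
  set R : ℝ := |u| + 1 with hRdef
  have hR : 1 ≤ R := le_add_of_nonneg_left (abs_nonneg u)
  have hu : u ∈ ball (0:ℝ) R := by
    simp [mem_ball, Real.dist_eq, hRdef]
  have h0 : (0:ℝ) ∈ ball (0:ℝ) R := by
    simp only [mem_ball, dist_self]; positivity
  refine hasDerivAt_tsum_of_isPreconnected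
    (g := fun (m : ℕ) (y : ℝ) => ((m : ℝ) * y ^ (m - 1)) / ((Nat.factorial m : ℝ) * (Nat.factorial (m + 1) : ℝ)))
    (g' := fun (m : ℕ) (y : ℝ) => ((m : ℝ) * (((m-1 : ℕ) : ℝ) * y ^ (m - 1 - 1))) / ((Nat.factorial m : ℝ) * (Nat.factorial (m + 1) : ℝ)))
    (summable_pow_fact (4*R)) isOpen_ball
    (convex_ball 0 R).isPreconnected
    (fun m y _ => (((hasDerivAt_pow (m-1) y).const_mul (m:ℝ)).div_const _))
    (fun m y hy => bound2 hR m (by simpa [mem_ball, Real.dist_eq] using hy))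
    h0 ?_ hu
  have : (fun m : ℕ => ((m:ℝ) * (0:ℝ) ^ (m-1)) / ((Nat.factorial m : ℝ) * (Nat.factorial (m + 1) : ℝ)))
      = fun m : ℕ => (0:ℝ) ^ (m-1) * ((m:ℝ) * ((Nat.factorial m : ℝ) * (Nat.factorial (m + 1) : ℝ))⁻¹) := by
    funext m; field_simp
  rw [this]
  apply summable_of_ne_finset_zero (s := {0, 1})
  intro m hm
  simp only [Finset.mem_insert, Finset.mem_singleton] at hm
  push_neg at hm
  rw [zero_pow (by omega), zero_mul]

@[fun_prop] lemma continuous_Fser : Continuous Fser :=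
  continuous_iff_continuousAt.mpr fun u => (hasDerivAt_Fser u).continuousAt

@[fun_prop] lemma continuous_F1 : Continuous F1 :=
  continuous_iff_continuousAt.mpr fun u => (hasDerivAt_F1 u).continuousAt

lemma Kker_eq (c x y : ℝ) : Kker c x y = -(c/2) * x * Fser (c*(x^2-y^2)/4) := rfl

lemma Lker_eq (c x y : ℝ) : Lker c x y = -(c/2) * x * Fser (-(c*(x^2-y^2)/4)) := by
  unfold Lker Fser
  congr 1
  exact tsum_congr fun m => by rw [show (-(c*(x^2-y^2)/4))^m = (-1)^m * (c*(x^2-y^2)/4)^m from neg_pow _ m]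

lemma continuous_Kker (c : ℝ) : Continuous fun p : ℝ × ℝ => Kker c p.1 p.2 := by
  simp only [Kker_eq]
  fun_prop

lemma continuous_Lker (c : ℝ) : Continuous fun p : ℝ × ℝ => Lker c p.1 p.2 := by
  simp only [Lker_eq]
  fun_prop

noncomputable def DK (c y : ℝ) : ℝ :=
  -(c/2) * Fser (c*(1^2-y^2)/4) + (-(c/2) * 1) * (F1 (c*(1^2-y^2)/4) * (c*(2*1)/4))

lemma hasDerivAt_Kker (c y ξ : ℝ) :
    HasDerivAt (fun ξ => Kker c ξ y)
      (-(c/2) * Fser (c*(ξ^2-y^2)/4) + (-(c/2) * ξ) * (F1 (c*(ξ^2-y^2)/4) * (c*(2*ξ)/4))) ξ := by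
  have hw : HasDerivAt (fun ξ : ℝ => c*(ξ^2-y^2)/4) (c*(2*ξ)/4) ξ := by
    have h := (((hasDerivAt_pow 2 ξ).sub_const (y^2)).const_mul c).div_const 4
    simpa using h
  have hF : HasDerivAt (fun ξ : ℝ => Fser (c*(ξ^2-y^2)/4))
      (F1 (c*(ξ^2-y^2)/4) * (c*(2*ξ)/4)) ξ :=
    (hasDerivAt_Fser _).comp ξ hw
  have h1 : HasDerivAt (fun ξ : ℝ => -(c/2) * ξ) (-(c/2)) ξ := by
    simpa using (hasDerivAt_id ξ).const_mul (-(c/2))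
  have := h1.mul hF
  simp only [Kker_eq]
  exact this

lemma derivK_eq (c y : ℝ) : deriv (fun ξ => Kker c ξ y) 1 = DK c y :=
  (hasDerivAt_Kker c y 1).deriv

lemma continuous_DK (c : ℝ) : Continuous (DK c) := by
  unfold DK
  have := continuous_Fser
  have := continuous_F1
  fun_prop

open intervalIntegral MeasureTheory

lemma sq_int_nonneg (f : ℝ → ℝ) {a b : ℝ} (hab : a ≤ b) :
    0 ≤ ∫ x in a..b, f x ^ 2 :=
  integral_nonneg hab fun x _ => sq_nonneg _

/-- Cauchy–Schwarz for interval integrals of continuous functions. -/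
lemma CS (f g : ℝ → ℝ) (hf : Continuous f) (hg : Continuous g) {a b : ℝ} (hab : a ≤ b) :
    |∫ x in a..b, f x * g x| ≤
      Real.sqrt (∫ x in a..b, f x ^ 2) * Real.sqrt (∫ x in a..b, g x ^ 2) := by
  set A := ∫ x in a..b, f x ^ 2 with hA
  set B := ∫ x in a..b, f x * g x with hB
  set C := ∫ x in a..b, g x ^ 2 with hC
  have hA0 : 0 ≤ A := sq_int_nonneg f hab
  have hC0 : 0 ≤ C := sq_int_nonneg g hab
  have key : ∀ lam : ℝ, 0 ≤ C * (lam * lam) + (2 * B) * lam + A := by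
    intro lam
    have h1 : ∫ x in a..b, (f x + lam * g x) ^ 2
        = A + 2 * lam * B + lam ^ 2 * C := by
      have e : ∀ x : ℝ, (f x + lam * g x) ^ 2
          = f x ^ 2 + (2 * lam) * (f x * g x) + lam ^ 2 * g x ^ 2 := fun x => by ring
      rw [intervalIntegral.integral_congr (g := fun x => f x ^ 2 + (2*lam) * (f x * g x) + lam ^ 2 * g x ^ 2)
        (fun x _ => e x)]
      rw [intervalIntegral.integral_add (f := fun x => f x ^ 2 + (2*lam) * (f x * g x)) (g := fun x => lam ^ 2 * g x ^ 2) (((hf.pow 2).add (continuous_const.mul (hf.mul hg))).intervalIntegrable a b)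
        ((continuous_const.mul (hg.pow 2)).intervalIntegrable a b),
        intervalIntegral.integral_add (f := fun x => f x ^ 2) (g := fun x => (2*lam) * (f x * g x)) ((hf.pow 2).intervalIntegrable a b)
        ((continuous_const.mul (hf.mul hg)).intervalIntegrable a b),
        intervalIntegral.integral_const_mul, intervalIntegral.integral_const_mul]
    have h2 : 0 ≤ ∫ x in a..b, (f x + lam * g x) ^ 2 := sq_int_nonneg _ hab
    rw [h1] at h2
    nlinarith [h2]
  have hd := discrim_le_zero key
  rw [discrim] at hd
  have hBsq : B ^ 2 ≤ A * C := by nlinarith [hd]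
  calc |B| = Real.sqrt (B ^ 2) := (Real.sqrt_sq_eq_abs B).symm
    _ ≤ Real.sqrt (A * C) := Real.sqrt_le_sqrt hBsq
    _ = Real.sqrt A * Real.sqrt C := Real.sqrt_mul hA0 _

lemma CS' (f g : ℝ → ℝ) (hf : Continuous f) (hg : Continuous g) {a b : ℝ} (hab : a ≤ b) :
    (∫ x in a..b, f x * g x) ≤
      Real.sqrt (∫ x in a..b, f x ^ 2) * Real.sqrt (∫ x in a..b, g x ^ 2) :=
  (le_abs_self _).trans (CS f g hf hg hab)

/-- Minkowski/triangle inequality in L² over an interval, for continuous functions. -/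
lemma minkowski (f g : ℝ → ℝ) (hf : Continuous f) (hg : Continuous g) {a b : ℝ} (hab : a ≤ b) :
    Real.sqrt (∫ x in a..b, (f x + g x) ^ 2) ≤
      Real.sqrt (∫ x in a..b, f x ^ 2) + Real.sqrt (∫ x in a..b, g x ^ 2) := by
  set A := ∫ x in a..b, f x ^ 2 with hA
  set C := ∫ x in a..b, g x ^ 2 with hC
  have hA0 : 0 ≤ A := sq_int_nonneg f hab
  have hC0 : 0 ≤ C := sq_int_nonneg g hab
  have h1 : ∫ x in a..b, (f x + g x) ^ 2 = A + 2 * (∫ x in a..b, f x * g x) + C := by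
    rw [intervalIntegral.integral_congr (g := fun x => f x ^ 2 + 2 * (f x * g x) + g x ^ 2)
      (fun x _ => by ring)]
    rw [intervalIntegral.integral_add (f := fun x => f x ^ 2 + 2 * (f x * g x)) (g := fun x => g x ^ 2) (((hf.pow 2).add (continuous_const.mul (hf.mul hg))).intervalIntegrable a b)
      ((hg.pow 2).intervalIntegrable a b),
      intervalIntegral.integral_add (f := fun x => f x ^ 2) (g := fun x => 2 * (f x * g x)) ((hf.pow 2).intervalIntegrable a b)
      ((continuous_const.mul (hf.mul hg)).intervalIntegrable a b),
      intervalIntegral.integral_const_mul]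
  have h2 : (∫ x in a..b, (f x + g x) ^ 2) ≤ (Real.sqrt A + Real.sqrt C) ^ 2 := by
    rw [h1]
    have := CS' f g hf hg hab
    nlinarith [Real.sq_sqrt hA0, Real.sq_sqrt hC0, this]
  calc Real.sqrt (∫ x in a..b, (f x + g x) ^ 2) ≤ Real.sqrt ((Real.sqrt A + Real.sqrt C) ^ 2) :=
        Real.sqrt_le_sqrt h2
    _ = |Real.sqrt A + Real.sqrt C| := Real.sqrt_sq_eq_abs _
    _ = Real.sqrt A + Real.sqrt C := abs_of_nonneg (by positivity)

/-- Operator norm bound for the Volterra operator with kernel `k`. -/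
lemma opBound (k : ℝ → ℝ → ℝ) (hk : Continuous fun p : ℝ × ℝ => k p.1 p.2)
    (f : ℝ → ℝ) (hf : Continuous f) :
    Real.sqrt (∫ x in (0:ℝ)..1, (∫ y in (0:ℝ)..x, k x y * f y) ^ 2) ≤
      kerNorm k * Real.sqrt (∫ y in (0:ℝ)..1, f y ^ 2) := by
  set Cf := ∫ y in (0:ℝ)..1, f y ^ 2 with hCf
  have hCf0 : 0 ≤ Cf := sq_int_nonneg f zero_le_one
  have hGcont : Continuous fun x => ∫ y in (0:ℝ)..x, k x y * f y := by
    apply intervalIntegral.continuous_parametric_intervalIntegral_of_continuous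
      (f := fun x y => k x y * f y) _ continuous_id
    exact hk.mul (hf.comp continuous_snd)
  have hQcont : Continuous fun x => ∫ y in (0:ℝ)..x, k x y ^ 2 := by
    apply intervalIntegral.continuous_parametric_intervalIntegral_of_continuous
      (f := fun x y => k x y ^ 2) _ continuous_id
    exact hk.pow 2
  have hpt : ∀ x ∈ Set.Icc (0:ℝ) 1,
      (∫ y in (0:ℝ)..x, k x y * f y) ^ 2 ≤ (∫ y in (0:ℝ)..x, k x y ^ 2) * Cf := by
    intro x hx
    have hkx : Continuous (k x) := hk.comp (Continuous.prodMk_right x)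
    have h1 := CS (k x) f hkx hf hx.1
    have hA0 : 0 ≤ ∫ y in (0:ℝ)..x, k x y ^ 2 := sq_int_nonneg _ hx.1
    have hCx0 : 0 ≤ ∫ y in (0:ℝ)..x, f y ^ 2 := sq_int_nonneg _ hx.1
    have hCx : (∫ y in (0:ℝ)..x, f y ^ 2) ≤ Cf := by
      apply intervalIntegral.integral_mono_interval le_rfl hx.1 hx.2
      · exact Filter.Eventually.of_forall fun y => sq_nonneg _
      · exact (hf.pow 2).intervalIntegrable 0 1
    calc (∫ y in (0:ℝ)..x, k x y * f y) ^ 2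
        = |∫ y in (0:ℝ)..x, k x y * f y| ^ 2 := (sq_abs _).symm
      _ ≤ (Real.sqrt (∫ y in (0:ℝ)..x, k x y ^ 2) * Real.sqrt (∫ y in (0:ℝ)..x, f y ^ 2)) ^ 2 := by
          apply pow_le_pow_left₀ (abs_nonneg _) h1
      _ = (∫ y in (0:ℝ)..x, k x y ^ 2) * (∫ y in (0:ℝ)..x, f y ^ 2) := by
          rw [mul_pow, Real.sq_sqrt hA0, Real.sq_sqrt hCx0]
      _ ≤ (∫ y in (0:ℝ)..x, k x y ^ 2) * Cf := by
          exact mul_le_mul_of_nonneg_left hCx hA0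
  have hQ0 : 0 ≤ ∫ x in (0:ℝ)..1, ∫ y in (0:ℝ)..x, k x y ^ 2 :=
    intervalIntegral.integral_nonneg zero_le_one fun x hx => sq_int_nonneg _ hx.1
  have h2 : (∫ x in (0:ℝ)..1, (∫ y in (0:ℝ)..x, k x y * f y) ^ 2)
      ≤ (∫ x in (0:ℝ)..1, ∫ y in (0:ℝ)..x, k x y ^ 2) * Cf := by
    rw [← intervalIntegral.integral_mul_const]
    exact intervalIntegral.integral_mono_on zero_le_one
      ((hGcont.pow 2).intervalIntegrable 0 1)
      ((hQcont.mul continuous_const).intervalIntegrable 0 1) hpt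
  calc Real.sqrt (∫ x in (0:ℝ)..1, (∫ y in (0:ℝ)..x, k x y * f y) ^ 2)
      ≤ Real.sqrt ((∫ x in (0:ℝ)..1, ∫ y in (0:ℝ)..x, k x y ^ 2) * Cf) := Real.sqrt_le_sqrt h2
    _ = kerNorm k * Real.sqrt Cf := by rw [Real.sqrt_mul hQ0]; rfl

/-- Agmon-type inequality on `[0,1]`. -/
lemma agmon (f f' : ℝ → ℝ) (hdf : ∀ x, HasDerivAt f (f' x) x)
    (hf : Continuous f) (hf' : Continuous f') :
    f 1 ^ 2 ≤ 2 * (∫ x in (0:ℝ)..1, f x ^ 2) + ∫ x in (0:ℝ)..1, f' x ^ 2 := by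
  set A := ∫ x in (0:ℝ)..1, f x ^ 2 with hA
  set C := ∫ x in (0:ℝ)..1, f' x ^ 2 with hC
  have habs : (∫ x in (0:ℝ)..1, |2 * (f x * f' x)|) ≤ A + C := by
    have e1 : ∀ x : ℝ, |2 * (f x * f' x)| = 2 * (|f x| * |f' x|) := by
      intro x; rw [abs_mul, abs_mul, abs_two]
    rw [intervalIntegral.integral_congr (g := fun x => 2 * (|f x| * |f' x|)) (fun x _ => e1 x),
      intervalIntegral.integral_const_mul]
    have hcs := CS' (fun x => |f x|) (fun x => |f' x|) hf.abs hf'.abs zero_le_one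
    simp only [sq_abs] at hcs
    have h2 : 2 * (∫ x in (0:ℝ)..1, |f x| * |f' x|) ≤ 2 * (Real.sqrt A * Real.sqrt C) := by
      linarith
    have hA0 : 0 ≤ A := sq_int_nonneg f zero_le_one
    have hC0 : 0 ≤ C := sq_int_nonneg f' zero_le_one
    nlinarith [Real.sq_sqrt hA0, Real.sq_sqrt hC0, Real.sqrt_nonneg A, Real.sqrt_nonneg C,
      sq_nonneg (Real.sqrt A - Real.sqrt C)]
  have hpt : ∀ x ∈ Set.Icc (0:ℝ) 1, f 1 ^ 2 ≤ f x ^ 2 + (A + C) := by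
    intro x hx
    have hftc : ∫ y in x..1, 2 * (f y * f' y) = f 1 ^ 2 - f x ^ 2 := by
      have : ∀ y ∈ Set.uIcc x 1, HasDerivAt (fun z => f z ^ 2) (2 * (f y * f' y)) y := by
        intro y _
        have h := (hdf y).mul (hdf y)
        have e : (fun z => f z ^ 2) = fun z => f z * f z := by funext z; ring
        rw [e]
        exact h.congr_deriv (by ring)
      apply intervalIntegral.integral_eq_sub_of_hasDerivAt this
      exact (continuous_const.mul (hf.mul hf')).intervalIntegrable x 1
    have hle : (∫ y in x..1, 2 * (f y * f' y)) ≤ ∫ y in (0:ℝ)..1, |2 * (f y * f' y)| := by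
      calc (∫ y in x..1, 2 * (f y * f' y)) ≤ ∫ y in x..1, |2 * (f y * f' y)| := by
            apply intervalIntegral.integral_mono_on hx.2
              ((continuous_const.mul (hf.mul hf')).intervalIntegrable x 1)
              ((continuous_const.mul (hf.mul hf')).abs.intervalIntegrable x 1)
            exact fun y _ => le_abs_self _
        _ ≤ ∫ y in (0:ℝ)..1, |2 * (f y * f' y)| := by
            apply intervalIntegral.integral_mono_interval hx.1 hx.2 le_rfl
            · exact Filter.Eventually.of_forall fun y => abs_nonneg _
            · exact (continuous_const.mul (hf.mul hf')).abs.intervalIntegrable 0 1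
    nlinarith [hftc, hle, habs]
  have : f 1 ^ 2 = ∫ x in (0:ℝ)..1, f 1 ^ 2 := by simp
  rw [this]
  have h3 : (∫ x in (0:ℝ)..1, f 1 ^ 2) ≤ ∫ x in (0:ℝ)..1, (f x ^ 2 + (A + C)) := by
    apply intervalIntegral.integral_mono_on zero_le_one
      (continuous_const.intervalIntegrable 0 1)
      (((hf.pow 2).add continuous_const).intervalIntegrable 0 1) hpt
  calc (∫ x in (0:ℝ)..1, f 1 ^ 2) ≤ ∫ x in (0:ℝ)..1, (f x ^ 2 + (A + C)) := h3
    _ = A + (A + C) := by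
        rw [intervalIntegral.integral_add (f := fun x => f x ^ 2) (g := fun _ => A + C) ((hf.pow 2).intervalIntegrable 0 1)
          (continuous_const.intervalIntegrable 0 1)]
        simp [hA]
    _ = 2 * A + C := by ring

lemma volterra_cont (k : ℝ → ℝ → ℝ) (hk : Continuous fun p : ℝ × ℝ => k p.1 p.2)
    (f : ℝ → ℝ) (hf : Continuous f) :
    Continuous fun x => ∫ y in (0:ℝ)..x, k x y * f y := by
  apply intervalIntegral.continuous_parametric_intervalIntegral_of_continuous
    (f := fun x y => k x y * f y) _ continuous_id
  exact hk.mul (hf.comp continuous_snd)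

lemma int_lin4 (c1 c2 c3 c4 : ℝ) (f1 f2 f3 f4 : ℝ → ℝ)
    (h1 : Continuous f1) (h2 : Continuous f2) (h3 : Continuous f3) (h4 : Continuous f4) :
    (∫ x in (0:ℝ)..1, (c1 * f1 x + c2 * f2 x + c3 * f3 x + c4 * f4 x)) =
      c1 * (∫ x in (0:ℝ)..1, f1 x) + c2 * (∫ x in (0:ℝ)..1, f2 x) +
      c3 * (∫ x in (0:ℝ)..1, f3 x) + c4 * (∫ x in (0:ℝ)..1, f4 x) := by
  rw [intervalIntegral.integral_add, intervalIntegral.integral_add, intervalIntegral.integral_add,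
    intervalIntegral.integral_const_mul, intervalIntegral.integral_const_mul,
    intervalIntegral.integral_const_mul, intervalIntegral.integral_const_mul]
  · exact (continuous_const.mul h1).intervalIntegrable 0 1
  · exact (continuous_const.mul h2).intervalIntegrable 0 1
  · exact ((continuous_const.mul h1).add (continuous_const.mul h2)).intervalIntegrable 0 1
  · exact (continuous_const.mul h3).intervalIntegrable 0 1
  · exact (((continuous_const.mul h1).add (continuous_const.mul h2)).add
      (continuous_const.mul h3)).intervalIntegrable 0 1
  · exact (continuous_const.mul h4).intervalIntegrable 0 1

lemma diff_of_contDiff2 {f : ℝ → ℝ} (h : ContDiff ℝ 2 f) :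
    Differentiable ℝ (deriv f) := by
  have h' : ContDiff ℝ ((1:ℕ) + 1) f := by exact_mod_cast h
  rw [contDiff_succ_iff_deriv] at h'
  exact h'.2.2.differentiable (by norm_num)

set_option maxHeartbeats 1000000 in
lemma mainEstimate (o₂ ρ α β γ : ℝ) (hγ : 0 < γ)
    (w v wt : ℝ → ℝ)
    (hw : Continuous w) (hv : Continuous v) (hwt : Continuous wt)
    (hwc2 : ContDiff ℝ 2 w) (hvc2 : ContDiff ℝ 2 v)
    (hwx : Continuous (deriv w)) (hwxx : Continuous (deriv (deriv w)))
    (hvx : Continuous (deriv v)) (hvxx : Continuous (deriv (deriv v)))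
    (hpde : ∀ x ∈ Set.Icc (0:ℝ) 1, wt x =
      deriv (deriv w) x - (o₂ + ρ) * w x + α * v x -
        α * ∫ y in (0:ℝ)..x, Kker o₂ x y * v y)
    (hell : ∀ x ∈ Set.Icc (0:ℝ) 1, (0:ℝ) =
      deriv (deriv v) x - γ * v x + β * w x +
        β * ∫ y in (0:ℝ)..x, Lker o₂ x y * w y)
    (hbw0 : deriv w 0 = 0)
    (hbw1 : deriv w 1 = -∫ y in (0:ℝ)..1, deriv (fun ξ => Kker o₂ ξ y) 1 *
        (w y + ∫ z in (0:ℝ)..y, Lker o₂ y z * w z))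
    (hbv0 : deriv v 0 = 0) (hbv1 : deriv v 1 = 0) :
    (∫ x in (0:ℝ)..1, 2 * w x * wt x) ≤
      (-2 * ((o₂ + ρ) -
        (|α| * |β| / γ) * (1 + kerNorm (Kker o₂)) * (1 + kerNorm (Lker o₂)) -
        ((1 + kerNorm (Lker o₂)) ^ 2 * (kerXNorm o₂) ^ 2 + 2) / 2)) *
      ∫ x in (0:ℝ)..1, w x ^ 2 := by
  set K₀ := kerNorm (Kker o₂) with hK₀
  set L₀ := kerNorm (Lker o₂) with hL₀
  set X₀ := kerXNorm o₂ with hX₀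
  have hK₀0 : 0 ≤ K₀ := Real.sqrt_nonneg _
  have hL₀0 : 0 ≤ L₀ := Real.sqrt_nonneg _
  have hX₀0 : 0 ≤ X₀ := Real.sqrt_nonneg _
  -- abbreviations
  set Kv : ℝ → ℝ := fun x => ∫ y in (0:ℝ)..x, Kker o₂ x y * v y with hKv
  set Lw : ℝ → ℝ := fun x => ∫ y in (0:ℝ)..x, Lker o₂ x y * w y with hLw
  have hKvc : Continuous Kv := volterra_cont _ (continuous_Kker o₂) v hv
  have hLwc : Continuous Lw := volterra_cont _ (continuous_Lker o₂) w hw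
  set A := ∫ x in (0:ℝ)..1, w x ^ 2 with hAdef
  set Cv := ∫ x in (0:ℝ)..1, v x ^ 2 with hCvdef
  set Nw := Real.sqrt A with hNwdef
  set Nv := Real.sqrt Cv with hNvdef
  have hA0 : 0 ≤ A := sq_int_nonneg w zero_le_one
  have hCv0 : 0 ≤ Cv := sq_int_nonneg v zero_le_one
  have hNw0 : 0 ≤ Nw := Real.sqrt_nonneg _
  have hNv0 : 0 ≤ Nv := Real.sqrt_nonneg _
  have hNwsq : Nw ^ 2 = A := Real.sq_sqrt hA0
  have hNvsq : Nv ^ 2 = Cv := Real.sq_sqrt hCv0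
  -- derivatives
  have hdw : ∀ x : ℝ, HasDerivAt w (deriv w x) x := fun x =>
    ((hwc2.differentiable (by norm_num)) x).hasDerivAt
  have hdwx : ∀ x : ℝ, HasDerivAt (deriv w) (deriv (deriv w) x) x := fun x =>
    ((diff_of_contDiff2 hwc2) x).hasDerivAt
  have hdv : ∀ x : ℝ, HasDerivAt v (deriv v x) x := fun x =>
    ((hvc2.differentiable (by norm_num)) x).hasDerivAt
  have hdvx : ∀ x : ℝ, HasDerivAt (deriv v) (deriv (deriv v) x) x := fun x =>
    ((diff_of_contDiff2 hvc2) x).hasDerivAt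
  set NwX := ∫ x in (0:ℝ)..1, deriv w x ^ 2 with hNwX
  have hNwX0 : 0 ≤ NwX := sq_int_nonneg _ zero_le_one
  -- Step 1 : rewrite the integral using the PDE
  have hI : (∫ x in (0:ℝ)..1, 2 * w x * wt x) =
      ∫ x in (0:ℝ)..1, (2 * (w x * deriv (deriv w) x) + (-(2 * (o₂ + ρ))) * (w x ^ 2) +
        (2 * α) * (w x * v x) + (-(2 * α)) * (w x * Kv x)) := by
    apply intervalIntegral.integral_congr
    intro x hx
    rw [Set.uIcc_of_le zero_le_one] at hx
    show 2 * w x * wt x = 2 * (w x * deriv (deriv w) x) + (-(2 * (o₂ + ρ))) * (w x ^ 2) +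
      (2 * α) * (w x * v x) + (-(2 * α)) * (w x * Kv x)
    rw [hpde x hx]
    ring
  have hsplit : (∫ x in (0:ℝ)..1, 2 * w x * wt x) =
      2 * (∫ x in (0:ℝ)..1, w x * deriv (deriv w) x) + (-(2 * (o₂ + ρ))) * A +
      (2 * α) * (∫ x in (0:ℝ)..1, w x * v x) + (-(2 * α)) * (∫ x in (0:ℝ)..1, w x * Kv x) := by
    rw [hI, int_lin4 _ _ _ _ (fun x => w x * deriv (deriv w) x) (fun x => w x ^ 2) (fun x => w x * v x) (fun x => w x * Kv x) (hw.mul hwxx) (hw.pow 2) (hw.mul hv) (hw.mul hKvc)]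
  -- Step 2 : integration by parts
  have hibp : (∫ x in (0:ℝ)..1, (deriv w x * deriv w x + w x * deriv (deriv w) x)) =
      w 1 * deriv w 1 - w 0 * deriv w 0 :=
    intervalIntegral.integral_deriv_mul_eq_sub (fun x _ => hdw x) (fun x _ => hdwx x)
      (hwx.intervalIntegrable 0 1) (hwxx.intervalIntegrable 0 1)
  have hI1 : (∫ x in (0:ℝ)..1, w x * deriv (deriv w) x) = w 1 * deriv w 1 - NwX := by
    have e : (∫ x in (0:ℝ)..1, (deriv w x * deriv w x + w x * deriv (deriv w) x)) =
        NwX + ∫ x in (0:ℝ)..1, w x * deriv (deriv w) x := by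
      rw [intervalIntegral.integral_add (f := fun x => deriv w x * deriv w x) (g := fun x => w x * deriv (deriv w) x) ((hwx.mul hwx).intervalIntegrable 0 1)
        ((hw.mul hwxx).intervalIntegrable 0 1)]
      congr 1
      exact intervalIntegral.integral_congr fun x _ => (sq (deriv w x)) ▸ (sq (deriv w x)).symm ▸ rfl
    rw [hbw0] at hibp
    rw [e] at hibp
    linarith
  -- Step 3 : elliptic estimate
  have hNv_le : Nv ≤ (|β| / γ) * (1 + L₀) * Nw := by
    have hibpv : (∫ x in (0:ℝ)..1, (deriv v x * deriv v x + v x * deriv (deriv v) x)) =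
        v 1 * deriv v 1 - v 0 * deriv v 0 :=
      intervalIntegral.integral_deriv_mul_eq_sub (fun x _ => hdv x) (fun x _ => hdvx x)
        (hvx.intervalIntegrable 0 1) (hvxx.intervalIntegrable 0 1)
    rw [hbv0, hbv1, mul_zero, mul_zero, sub_zero] at hibpv
    have hvx2 : (0:ℝ) ≤ ∫ x in (0:ℝ)..1, deriv v x * deriv v x := by
      apply intervalIntegral.integral_nonneg zero_le_one
      intro x _; exact mul_self_nonneg _
    have hvxxeq : (∫ x in (0:ℝ)..1, v x * deriv (deriv v) x) =
        γ * Cv + (-β) * (∫ x in (0:ℝ)..1, v x * w x) + (-β) * (∫ x in (0:ℝ)..1, v x * Lw x)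
          + 0 * 0 := by
      have : (∫ x in (0:ℝ)..1, v x * deriv (deriv v) x) =
          ∫ x in (0:ℝ)..1, (γ * (v x ^ 2) + (-β) * (v x * w x) + (-β) * (v x * Lw x) + 0 * 0) := by
        apply intervalIntegral.integral_congr
        intro x hx
        rw [Set.uIcc_of_le zero_le_one] at hx
        show v x * deriv (deriv v) x =
          γ * (v x ^ 2) + (-β) * (v x * w x) + (-β) * (v x * Lw x) + 0 * 0
        have h := hell x hx
        have : deriv (deriv v) x = γ * v x - β * w x - β * Lw x := by
          simp only [hLw]
          linarith [h]
        rw [this]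
        ring
      rw [this, int_lin4 _ _ _ _ (fun x => v x ^ 2) (fun x => v x * w x) (fun x => v x * Lw x) (fun _ => (0:ℝ)) (hv.pow 2) (hv.mul hw) (hv.mul hLwc) continuous_const]
      simp [hCvdef]
    have hsum : (∫ x in (0:ℝ)..1, (deriv v x * deriv v x + v x * deriv (deriv v) x)) =
        (∫ x in (0:ℝ)..1, deriv v x * deriv v x) + ∫ x in (0:ℝ)..1, v x * deriv (deriv v) x := by
      exact intervalIntegral.integral_add ((hvx.mul hvx).intervalIntegrable 0 1)
        ((hv.mul hvxx).intervalIntegrable 0 1)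
    have hvw : |∫ x in (0:ℝ)..1, v x * w x| ≤ Nv * Nw := CS v w hv hw zero_le_one
    have hvLw : |∫ x in (0:ℝ)..1, v x * Lw x| ≤ Nv * (L₀ * Nw) := by
      have h1 := CS v Lw hv hLwc zero_le_one
      have h2 : Real.sqrt (∫ x in (0:ℝ)..1, Lw x ^ 2) ≤ L₀ * Nw :=
        opBound _ (continuous_Lker o₂) w hw
      calc |∫ x in (0:ℝ)..1, v x * Lw x| ≤ Nv * Real.sqrt (∫ x in (0:ℝ)..1, Lw x ^ 2) := h1
        _ ≤ Nv * (L₀ * Nw) := mul_le_mul_of_nonneg_left h2 hNv0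
    -- γ Cv ≤ |β| Nv Nw + |β| Nv L₀ Nw
    have hkey : γ * Cv ≤ |β| * (1 + L₀) * Nw * Nv := by
      have e1 : γ * Cv = β * (∫ x in (0:ℝ)..1, v x * w x) +
          β * (∫ x in (0:ℝ)..1, v x * Lw x) - ∫ x in (0:ℝ)..1, deriv v x * deriv v x := by
        rw [hsum, hvxxeq] at hibpv
        linarith
      have b1 : β * (∫ x in (0:ℝ)..1, v x * w x) ≤ |β| * (Nv * Nw) := by
        calc β * (∫ x in (0:ℝ)..1, v x * w x) ≤ |β * ∫ x in (0:ℝ)..1, v x * w x| := le_abs_self _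
          _ = |β| * |∫ x in (0:ℝ)..1, v x * w x| := abs_mul _ _
          _ ≤ |β| * (Nv * Nw) := mul_le_mul_of_nonneg_left hvw (abs_nonneg β)
      have b2 : β * (∫ x in (0:ℝ)..1, v x * Lw x) ≤ |β| * (Nv * (L₀ * Nw)) := by
        calc β * (∫ x in (0:ℝ)..1, v x * Lw x) ≤ |β * ∫ x in (0:ℝ)..1, v x * Lw x| := le_abs_self _
          _ = |β| * |∫ x in (0:ℝ)..1, v x * Lw x| := abs_mul _ _
          _ ≤ |β| * (Nv * (L₀ * Nw)) := mul_le_mul_of_nonneg_left hvLw (abs_nonneg β)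
      have := e1
      nlinarith [hvx2, b1, b2]
    rcases eq_or_lt_of_le hNv0 with h0 | hpos
    · rw [← h0]
      exact mul_nonneg (mul_nonneg (div_nonneg (abs_nonneg β) hγ.le) (by linarith)) hNw0
    · have h2 : γ * Nv ≤ |β| * (1 + L₀) * Nw := by
        rw [← hNvsq] at hkey
        nlinarith [hkey, hpos]
      rw [div_mul_eq_mul_div, div_mul_eq_mul_div, le_div_iff₀ hγ]
      nlinarith [h2]
  -- Step 4 : bounds on cross terms
  have hwv : |∫ x in (0:ℝ)..1, w x * v x| ≤ Nw * Nv := CS w v hw hv zero_le_one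
  have hwKv : |∫ x in (0:ℝ)..1, w x * Kv x| ≤ Nw * (K₀ * Nv) := by
    have h1 := CS w Kv hw hKvc zero_le_one
    have h2 : Real.sqrt (∫ x in (0:ℝ)..1, Kv x ^ 2) ≤ K₀ * Nv :=
      opBound _ (continuous_Kker o₂) v hv
    calc |∫ x in (0:ℝ)..1, w x * Kv x| ≤ Nw * Real.sqrt (∫ x in (0:ℝ)..1, Kv x ^ 2) := h1
      _ ≤ Nw * (K₀ * Nv) := mul_le_mul_of_nonneg_left h2 hNw0
  -- Step 5 : boundary term
  have hbdy : |deriv w 1| ≤ X₀ * (1 + L₀) * Nw := by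
    rw [hbw1, abs_neg]
    have hDKc : Continuous fun y => deriv (fun ξ => Kker o₂ ξ y) 1 := by
      have : (fun y => deriv (fun ξ => Kker o₂ ξ y) 1) = DK o₂ := funext fun y => derivK_eq o₂ y
      rw [this]; exact continuous_DK o₂
    have h1 := CS (fun y => deriv (fun ξ => Kker o₂ ξ y) 1) (fun y => w y + Lw y)
      hDKc (hw.add hLwc) zero_le_one
    have h2 : Real.sqrt (∫ y in (0:ℝ)..1, (w y + Lw y) ^ 2) ≤ Nw + L₀ * Nw := by
      calc Real.sqrt (∫ y in (0:ℝ)..1, (w y + Lw y) ^ 2)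
          ≤ Nw + Real.sqrt (∫ y in (0:ℝ)..1, Lw y ^ 2) := minkowski w Lw hw hLwc zero_le_one
        _ ≤ Nw + L₀ * Nw := by
            have := opBound _ (continuous_Lker o₂) w hw
            linarith
    calc |∫ y in (0:ℝ)..1, deriv (fun ξ => Kker o₂ ξ y) 1 * (w y + Lw y)|
        ≤ Real.sqrt (∫ y in (0:ℝ)..1, (deriv (fun ξ => Kker o₂ ξ y) 1) ^ 2) *
          Real.sqrt (∫ y in (0:ℝ)..1, (w y + Lw y) ^ 2) := h1
      _ ≤ X₀ * (Nw + L₀ * Nw) := by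
          apply mul_le_mul _ h2 (Real.sqrt_nonneg _) hX₀0
          exact le_of_eq rfl
      _ = X₀ * (1 + L₀) * Nw := by ring
  -- Step 6 : Agmon
  have hagmon : w 1 ^ 2 ≤ 2 * A + NwX :=
    agmon w (deriv w) hdw hw hwx
  -- Step 7 : assemble
  set M := X₀ * (1 + L₀) with hM
  have hM0 : 0 ≤ M := mul_nonneg hX₀0 (by linarith)
  have hb1 : 2 * (w 1 * deriv w 1) ≤ (1 + L₀) ^ 2 * X₀ ^ 2 * A + (2 * A + NwX) := by
    have h1 : 2 * (w 1 * deriv w 1) ≤ 2 * (|w 1| * (M * Nw)) := by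
      have : w 1 * deriv w 1 ≤ |w 1| * |deriv w 1| := by
        calc w 1 * deriv w 1 ≤ |w 1 * deriv w 1| := le_abs_self _
          _ = |w 1| * |deriv w 1| := abs_mul _ _
      have h2 : |w 1| * |deriv w 1| ≤ |w 1| * (M * Nw) :=
        mul_le_mul_of_nonneg_left hbdy (abs_nonneg _)
      linarith
    have h3 : 2 * (|w 1| * (M * Nw)) ≤ (M * Nw) ^ 2 + w 1 ^ 2 := by
      nlinarith [sq_nonneg (|w 1| - M * Nw), sq_abs (w 1)]
    have h4 : (M * Nw) ^ 2 = (1 + L₀) ^ 2 * X₀ ^ 2 * A := by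
      rw [mul_pow, hNwsq, hM]; ring
    nlinarith [hagmon]
  have hcross : (2 * α) * (∫ x in (0:ℝ)..1, w x * v x) +
      (-(2 * α)) * (∫ x in (0:ℝ)..1, w x * Kv x) ≤
      2 * (|α| * |β| / γ) * (1 + K₀) * (1 + L₀) * A := by
    have b1 : (2 * α) * (∫ x in (0:ℝ)..1, w x * v x) ≤ 2 * |α| * (Nw * Nv) := by
      calc (2 * α) * (∫ x in (0:ℝ)..1, w x * v x) ≤ |(2 * α) * ∫ x in (0:ℝ)..1, w x * v x| :=
            le_abs_self _
        _ = 2 * |α| * |∫ x in (0:ℝ)..1, w x * v x| := by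
            rw [abs_mul, abs_mul, abs_two]
        _ ≤ 2 * |α| * (Nw * Nv) := by
            apply mul_le_mul_of_nonneg_left hwv (mul_nonneg two_pos.le (abs_nonneg α))
    have b2 : (-(2 * α)) * (∫ x in (0:ℝ)..1, w x * Kv x) ≤ 2 * |α| * (Nw * (K₀ * Nv)) := by
      calc (-(2 * α)) * (∫ x in (0:ℝ)..1, w x * Kv x)
          ≤ |(-(2 * α)) * ∫ x in (0:ℝ)..1, w x * Kv x| := le_abs_self _
        _ = 2 * |α| * |∫ x in (0:ℝ)..1, w x * Kv x| := by
            rw [abs_mul, abs_neg, abs_mul, abs_two]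
        _ ≤ 2 * |α| * (Nw * (K₀ * Nv)) := by
            apply mul_le_mul_of_nonneg_left hwKv (mul_nonneg two_pos.le (abs_nonneg α))
    have hsum2 : 2 * |α| * (Nw * Nv) + 2 * |α| * (Nw * (K₀ * Nv)) =
        2 * |α| * (1 + K₀) * (Nw * Nv) := by ring
    have hNv2 : 2 * |α| * (1 + K₀) * (Nw * Nv) ≤
        2 * |α| * (1 + K₀) * (Nw * ((|β| / γ) * (1 + L₀) * Nw)) := by
      apply mul_le_mul_of_nonneg_left _
        (mul_nonneg (mul_nonneg two_pos.le (abs_nonneg α)) (by linarith))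
      exact mul_le_mul_of_nonneg_left hNv_le hNw0
    have e2 : 2 * |α| * (1 + K₀) * (Nw * ((|β| / γ) * (1 + L₀) * Nw)) =
        2 * (|α| * |β| / γ) * (1 + K₀) * (1 + L₀) * (Nw * Nw) := by
      ring
    have e3 : Nw * Nw = A := by
      rw [hNwdef]
      exact Real.mul_self_sqrt hA0
    linarith [b1, b2, hNv2, e2 ▸ hNv2, e3 ▸ (e2 ▸ hNv2)]
  rw [hsplit, hI1]
  have final : 2 * (w 1 * deriv w 1 - NwX) + (-(2 * (o₂ + ρ))) * A +
      ((2 * α) * (∫ x in (0:ℝ)..1, w x * v x) + (-(2 * α)) * (∫ x in (0:ℝ)..1, w x * Kv x)) ≤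
      (-2 * ((o₂ + ρ) - (|α| * |β| / γ) * (1 + K₀) * (1 + L₀) -
        ((1 + L₀) ^ 2 * X₀ ^ 2 + 2) / 2)) * A := by
    linarith [hb1, hcross, hNwX0]
  linarith [final]

end SMTD


/-- Theorem 18: exponential Lyapunov decay of the target observer
error system in the single-measurement case. -/
theorem single_measurement_target_decay (ρ α β γ o₂ : ℝ) (hγ : γ > 0) (ho₂ : o₂ > 0)
    (tew ev : ℝ → ℝ → ℝ)
    -- regularity of the classical solution
    (htew_cont : Continuous fun p : ℝ × ℝ => tew p.1 p.2)
    (hev_cont : Continuous fun p : ℝ × ℝ => ev p.1 p.2)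
    (htew_x : ∀ t : ℝ, ContDiff ℝ 2 fun x => tew x t)
    (hev_x : ∀ t : ℝ, ContDiff ℝ 2 fun x => ev x t)
    (htewx_cont : Continuous fun p : ℝ × ℝ => deriv (fun x => tew x p.2) p.1)
    (htewxx_cont : Continuous fun p : ℝ × ℝ => deriv (deriv (fun x => tew x p.2)) p.1)
    (hevx_cont : Continuous fun p : ℝ × ℝ => deriv (fun x => ev x p.2) p.1)
    (hevxx_cont : Continuous fun p : ℝ × ℝ => deriv (deriv (fun x => ev x p.2)) p.1)
    (htew_t : ∀ x : ℝ, ContDiff ℝ 1 fun t => tew x t)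
    (htewt_cont : Continuous fun p : ℝ × ℝ => deriv (fun t => tew p.1 t) p.2)
    -- the target observer error system
    (hpde : ∀ x ∈ Set.Icc (0:ℝ) 1, ∀ t : ℝ, 0 ≤ t →
      deriv (fun τ => tew x τ) t =
        deriv (deriv (fun ξ => tew ξ t)) x - (o₂ + ρ) * tew x t + α * ev x t -
          α * ∫ y in (0:ℝ)..x, Kker o₂ x y * ev y t)
    (hell : ∀ x ∈ Set.Icc (0:ℝ) 1, ∀ t : ℝ, 0 ≤ t →
      (0 : ℝ) = deriv (deriv (fun ξ => ev ξ t)) x - γ * ev x t + β * tew x t +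
        β * ∫ y in (0:ℝ)..x, Lker o₂ x y * tew y t)
    (hbw0 : ∀ t : ℝ, 0 ≤ t → deriv (fun ξ => tew ξ t) 0 = 0)
    (hbw1 : ∀ t : ℝ, 0 ≤ t → deriv (fun ξ => tew ξ t) 1 =
      -∫ y in (0:ℝ)..1, deriv (fun ξ => Kker o₂ ξ y) 1 *
        (tew y t + ∫ z in (0:ℝ)..y, Lker o₂ y z * tew z t))
    (hbv0 : ∀ t : ℝ, 0 ≤ t → deriv (fun ξ => ev ξ t) 0 = 0)
    (hbv1 : ∀ t : ℝ, 0 ≤ t → deriv (fun ξ => ev ξ t) 1 = 0)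
    -- the stability condition
    (hcond : o₂ + ρ >
      (|α| * |β| / γ) * (1 + kerNorm (Kker o₂)) * (1 + kerNorm (Lker o₂)) +
        ((1 + kerNorm (Lker o₂)) ^ 2 * (kerXNorm o₂) ^ 2 + 2) / 2)
    (o₃ : ℝ)
    (ho₃ : o₃ = (o₂ + ρ) -
      (|α| * |β| / γ) * (1 + kerNorm (Kker o₂)) * (1 + kerNorm (Lker o₂)) -
        ((1 + kerNorm (Lker o₂)) ^ 2 * (kerXNorm o₂) ^ 2 + 2) / 2) :
    ∀ t : ℝ, 0 ≤ t →
      (∫ x in (0:ℝ)..1, (tew x t) ^ 2) ≤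
        Real.exp (-2 * o₃ * t) * ∫ x in (0:ℝ)..1, (tew x 0) ^ 2 := by
  -- slice continuity
  have hw_slice : ∀ t : ℝ, Continuous fun x => tew x t := fun t =>
    htew_cont.comp (continuous_id.prodMk continuous_const)
  have hv_slice : ∀ t : ℝ, Continuous fun x => ev x t := fun t =>
    hev_cont.comp (continuous_id.prodMk continuous_const)
  have hwx_slice : ∀ t : ℝ, Continuous fun x => deriv (fun ξ => tew ξ t) x := fun t =>
    htewx_cont.comp (continuous_id.prodMk continuous_const)
  have hwxx_slice : ∀ t : ℝ, Continuous fun x => deriv (deriv (fun ξ => tew ξ t)) x := fun t =>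
    htewxx_cont.comp (continuous_id.prodMk continuous_const)
  have hvx_slice : ∀ t : ℝ, Continuous fun x => deriv (fun ξ => ev ξ t) x := fun t =>
    hevx_cont.comp (continuous_id.prodMk continuous_const)
  have hvxx_slice : ∀ t : ℝ, Continuous fun x => deriv (deriv (fun ξ => ev ξ t)) x := fun t =>
    hevxx_cont.comp (continuous_id.prodMk continuous_const)
  have hwt_slice : ∀ t : ℝ, Continuous fun x => deriv (fun τ => tew x τ) t := fun t =>
    htewt_cont.comp (continuous_id.prodMk continuous_const)
  have hdt : ∀ x t : ℝ, HasDerivAt (fun τ => tew x τ) (deriv (fun τ => tew x τ) t) t :=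
    fun x t => (((htew_t x).differentiable (by norm_num)) t).hasDerivAt
  set D : ℝ → ℝ := fun t => ∫ x in (0:ℝ)..1, 2 * tew x t * deriv (fun τ => tew x τ) t with hD
  -- Step A : differentiability of the energy
  have hWd : ∀ t₀ : ℝ, HasDerivAt (fun t => ∫ x in (0:ℝ)..1, tew x t ^ 2) (D t₀) t₀ := by
    intro t₀
    have hjoint : Continuous fun p : ℝ × ℝ => 2 * tew p.1 p.2 * deriv (fun τ => tew p.1 τ) p.2 :=
      (continuous_const.mul htew_cont).mul htewt_cont
    obtain ⟨C, hC⟩ := ((isCompact_Icc (a := (0:ℝ)) (b := 1)).prod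
      (isCompact_Icc (a := t₀ - 1) (b := t₀ + 1))).exists_bound_of_continuousOn
      hjoint.continuousOn
    refine (intervalIntegral.hasDerivAt_integral_of_dominated_loc_of_deriv_le (𝕜 := ℝ)
      (F := fun t x => tew x t ^ 2)
      (F' := fun t x => 2 * tew x t * deriv (fun τ => tew x τ) t)
      (a := 0) (b := 1) (bound := fun _ => C) (s := Metric.ball t₀ 1) (Metric.ball_mem_nhds t₀ zero_lt_one) ?_ ?_ ?_ ?_ ?_ ?_).2
    · exact Filter.Eventually.of_forall fun s => ((hw_slice s).pow 2).aestronglyMeasurable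
    · exact ((hw_slice t₀).pow 2).intervalIntegrable 0 1
    · exact ((continuous_const.mul (hw_slice t₀)).mul (hwt_slice t₀)).aestronglyMeasurable
    · refine Filter.Eventually.of_forall fun x hx => fun s hs => ?_
      have hx' : x ∈ Set.Icc (0:ℝ) 1 := by
        rw [Set.uIoc_of_le (zero_le_one (α := ℝ))] at hx
        exact Set.Ioc_subset_Icc_self hx
      have hs' : s ∈ Set.Icc (t₀ - 1) (t₀ + 1) := by
        rw [Metric.mem_ball, Real.dist_eq, abs_lt] at hs
        constructor <;> linarith [hs.1, hs.2]
      exact hC (x, s) ⟨hx', hs'⟩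
    · exact intervalIntegrable_const
    · refine Filter.Eventually.of_forall fun x hx => fun s _ => ?_
      have h := (hdt x s).mul (hdt x s)
      have e : (fun τ => tew x τ ^ 2) = fun τ => tew x τ * tew x τ := funext fun τ => sq (tew x τ)
      rw [e]
      exact h.congr_deriv (by ring)
  have hWcont : Continuous fun t => ∫ x in (0:ℝ)..1, tew x t ^ 2 :=
    continuous_iff_continuousAt.2 fun t => (hWd t).continuousAt
  -- Step B : the energy estimate
  have hest : ∀ s : ℝ, 0 ≤ s → D s ≤ (-2 * o₃) * ∫ x in (0:ℝ)..1, tew x s ^ 2 := by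
    intro s hs
    have h := SMTD.mainEstimate o₂ ρ α β γ hγ
      (fun x => tew x s) (fun x => ev x s) (fun x => deriv (fun τ => tew x τ) s)
      (hw_slice s) (hv_slice s) (hwt_slice s) (htew_x s) (hev_x s)
      (hwx_slice s) (hwxx_slice s) (hvx_slice s) (hvxx_slice s)
      (fun x hx => hpde x hx s hs) (fun x hx => hell x hx s hs)
      (hbw0 s hs) (hbw1 s hs) (hbv0 s hs) (hbv1 s hs)
    rw [ho₃]
    exact h
  -- Step C : Gronwall
  intro t ht
  have hG := le_gronwallBound_of_liminf_deriv_right_le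
    (f := fun t => ∫ x in (0:ℝ)..1, tew x t ^ 2) (f' := D)
    (δ := ∫ x in (0:ℝ)..1, tew x 0 ^ 2) (K := -2 * o₃) (ε := 0) (a := 0) (b := t)
    hWcont.continuousOn
    (fun s _ r hr => ((hWd s).hasDerivWithinAt.liminf_right_slope_le hr))
    le_rfl
    (fun s hs => by rw [add_zero]; exact hest s hs.1)
    t (Set.right_mem_Icc.mpr ht)
  rw [gronwallBound_ε0, sub_zero] at hG
  rw [mul_comm]
  exact hG
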